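/- Given non-negative real numbers x_1,...,x_n, there exist complex numbers z_1,...,z_n with |z_k| = x_k for all k and sum_k z_k = 0 if and only if the polygon inequalities x_k ≤ sum_{j≠k} x_j hold for all k. -/

import Mathlib

lemma aux_balanced {ι : Type*} [DecidableEq ι] (M : ℝ) (hM : 0 ≤ M) (x : ι → ℝ)
    (hx : ∀ i, 0 ≤ x i) :
    ∀ s : Finset ι, (∀ i ∈ s, x i ≤ M) →
      ∃ T ⊆ s, |2 * ∑ i ∈ T, x i - ∑ i ∈ s, x i| ≤ M := by
  intro s
  induction s using Finset.induction_on with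
  | empty => intro _; exact ⟨∅, Finset.Subset.refl _, by simpa using hM⟩
  | @insert a s ha ih =>
    intro hbound
    obtain ⟨T, hTs, hT⟩ := ih (fun i hi => hbound i (Finset.mem_insert_of_mem hi))
    have haT : a ∉ T := fun h => ha (hTs h)
    have hxa : x a ≤ M := hbound a (Finset.mem_insert_self a s)
    have hxa0 : 0 ≤ x a := hx a
    rw [abs_le] at hT
    rcases le_or_gt (2 * ∑ i ∈ T, x i - ∑ i ∈ s, x i) 0 with hd | hd
    · refine ⟨insert a T, Finset.insert_subset_insert a hTs, ?_⟩
      rw [Finset.sum_insert haT, Finset.sum_insert ha, abs_le]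
      constructor <;> linarith
    · refine ⟨T, hTs.trans (Finset.subset_insert a s), ?_⟩
      rw [Finset.sum_insert ha, abs_le]
      constructor <;> linarith

lemma aux_triangle (a b c : ℝ) (ha : 0 ≤ a) (hb : 0 ≤ b) (hc : 0 ≤ c)
    (h1 : a ≤ b + c) (h2 : b ≤ a + c) (h3 : c ≤ a + b) :
    ∃ u v w : ℂ, ‖u‖ = a ∧ ‖v‖ = b ∧ ‖w‖ = c ∧
      u + v + w = 0 := by
  rcases eq_or_lt_of_le ha with h0 | h0
  · have hbc : b = c := le_antisymm (by linarith) (by linarith)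
    refine ⟨0, b, -b, by simp [← h0], by simp [abs_of_nonneg hb], ?_, by ring⟩
    rw [norm_neg]
    simp [hbc, abs_of_nonneg hc]
  · set d : ℝ := (a^2 + b^2 - c^2) / (2*a) with hd
    have hbd : d^2 ≤ b^2 := by
      rw [hd, div_pow, div_le_iff₀ (by positivity)]
      have e1 : (a-b)^2 ≤ c^2 := by nlinarith
      have e2 : c^2 ≤ (a+b)^2 := by nlinarith
      nlinarith [mul_nonneg (sub_nonneg.2 e1) (sub_nonneg.2 e2)]
    set h : ℝ := Real.sqrt (b^2 - d^2) with hh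
    have hh2 : h^2 = b^2 - d^2 := Real.sq_sqrt (by linarith)
    have had : 2*a*d = a^2 + b^2 - c^2 := by rw [hd]; field_simp
    refine ⟨⟨a, 0⟩, ⟨-d, -h⟩, ⟨d - a, h⟩, ?_, ?_, ?_, ?_⟩
    · rw [Complex.norm_def, Complex.normSq_mk, show a*a + 0*0 = a^2 by ring,
        Real.sqrt_sq ha]
    · rw [Complex.norm_def, Complex.normSq_mk, show -d * -d + -h * -h = b^2 by
        nlinarith [hh2], Real.sqrt_sq hb]
    · rw [Complex.norm_def, Complex.normSq_mk, show (d-a)*(d-a) + h*h = c^2 by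
        nlinarith [hh2], Real.sqrt_sq hc]
    · apply Complex.ext <;> simp <;> ring

lemma aux_scale_abs (t d : ℝ) (v : ℂ) (ht : 0 ≤ t) (htd : t ≤ d)
    (hv : ‖v‖ = d) : ‖((t / d : ℝ) : ℂ) * v‖ = t := by
  rcases eq_or_lt_of_le (ht.trans htd) with h0 | h0
  · have ht0 : t = 0 := le_antisymm (h0 ▸ htd) ht
    simp [ht0]
  · rw [norm_mul, Complex.norm_real, Real.norm_eq_abs, hv,
      abs_of_nonneg (div_nonneg ht (le_of_lt h0)), div_mul_cancel₀ _ (ne_of_gt h0)]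

lemma aux_scale_self (d : ℝ) (v : ℂ) (hv : ‖v‖ = d) :
    ((d / d : ℝ) : ℂ) * v = v := by
  rcases eq_or_ne d 0 with h0 | h0
  · have : v = 0 := by
      exact norm_eq_zero.1 (by rw [hv, h0])
    simp [this]
  · rw [div_self h0]; simp

theorem stmt_0 (n : ℕ) (x : Fin n → ℝ) (hx : ∀ k, 0 ≤ x k) :
    (∃ z : Fin n → ℂ, (∀ k, ‖z k‖ = x k) ∧ ∑ k, z k = 0) ↔
      ∀ k, x k ≤ ∑ j ∈ Finset.univ.erase k, x j := by
  constructor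
  · rintro ⟨z, hz, hsum⟩ k
    have hk : z k = -∑ j ∈ Finset.univ.erase k, z j :=
      eq_neg_of_add_eq_zero_left (by
        rw [Finset.add_sum_erase Finset.univ z (Finset.mem_univ k), hsum])
    calc x k = ‖z k‖ := (hz k).symm
      _ = ‖∑ j ∈ Finset.univ.erase k, z j‖ := by rw [hk, norm_neg]
      _ ≤ ∑ j ∈ Finset.univ.erase k, ‖z j‖ := norm_sum_le _ _
      _ = ∑ j ∈ Finset.univ.erase k, x j := Finset.sum_congr rfl fun j _ => hz j
  · intro h
    rcases isEmpty_or_nonempty (Fin n) with he | hn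
    · exact ⟨fun _ => 0, fun k => he.elim k, by simp⟩
    · obtain ⟨k0, -, hk0⟩ := Finset.exists_max_image Finset.univ x Finset.univ_nonempty
      set s : Finset (Fin n) := Finset.univ.erase k0 with hs
      obtain ⟨T, hTs, hT⟩ := aux_balanced (x k0) (hx k0) x hx s
        (fun i _ => hk0 i (Finset.mem_univ i))
      set a : ℝ := x k0 with haa
      set b : ℝ := ∑ i ∈ T, x i with hb
      set c : ℝ := ∑ i ∈ s \ T, x i with hc
      have hsum_split : c + b = ∑ i ∈ s, x i := Finset.sum_sdiff hTs
      have hb0 : 0 ≤ b := Finset.sum_nonneg fun i _ => hx i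
      have hc0 : 0 ≤ c := Finset.sum_nonneg fun i _ => hx i
      have habc : a ≤ b + c := by rw [haa]; have := h k0; rw [← hs] at this; linarith
      rw [abs_le] at hT
      have h2 : b ≤ a + c := by linarith
      have h3 : c ≤ a + b := by linarith
      obtain ⟨u, v, w, hu, hv, hw, huvw⟩ := aux_triangle a b c (hx k0) hb0 hc0 habc h2 h3
      refine ⟨fun k => if k = k0 then ((x k / a : ℝ) : ℂ) * u
        else if k ∈ T then ((x k / b : ℝ) : ℂ) * v
        else ((x k / c : ℝ) : ℂ) * w, ?_, ?_⟩
      · intro k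
        by_cases hk : k = k0
        · subst hk
          simp only [if_pos rfl]
          exact aux_scale_abs _ _ _ (hx k) le_rfl hu
        · by_cases hkT : k ∈ T
          · simp only [if_neg hk, if_pos hkT]
            exact aux_scale_abs _ _ _ (hx k) (Finset.single_le_sum (fun i _ => hx i) hkT) hv
          · simp only [if_neg hk, if_neg hkT]
            have hks : k ∈ s \ T := Finset.mem_sdiff.2
              ⟨Finset.mem_erase.2 ⟨hk, Finset.mem_univ k⟩, hkT⟩
            exact aux_scale_abs _ _ _ (hx k) (Finset.single_le_sum (fun i _ => hx i) hks) hw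
      · rw [← Finset.add_sum_erase Finset.univ _ (Finset.mem_univ k0), ← hs,
          ← Finset.sum_sdiff hTs]
        have hTv : ∀ j ∈ T, (if j = k0 then ((x j / a : ℝ) : ℂ) * u
            else if j ∈ T then ((x j / b : ℝ) : ℂ) * v
            else ((x j / c : ℝ) : ℂ) * w) = ((x j / b : ℝ) : ℂ) * v := by
          intro j hj
          have : j ≠ k0 := Finset.ne_of_mem_erase (hTs hj)
          rw [if_neg this, if_pos hj]
        have hWw : ∀ j ∈ s \ T, (if j = k0 then ((x j / a : ℝ) : ℂ) * u
            else if j ∈ T then ((x j / b : ℝ) : ℂ) * v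
            else ((x j / c : ℝ) : ℂ) * w) = ((x j / c : ℝ) : ℂ) * w := by
          intro j hj
          rcases Finset.mem_sdiff.1 hj with ⟨hj1, hj2⟩
          rw [if_neg (Finset.ne_of_mem_erase hj1), if_neg hj2]
        rw [Finset.sum_congr rfl hTv, Finset.sum_congr rfl hWw, if_pos rfl]
        have e1 : ∑ j ∈ T, ((x j / b : ℝ) : ℂ) * v = v := by
          rw [← Finset.sum_mul, ← Complex.ofReal_sum, ← Finset.sum_div, ← hb]
          exact aux_scale_self b v hv
        have e2 : ∑ j ∈ s \ T, ((x j / c : ℝ) : ℂ) * w = w := by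
          rw [← Finset.sum_mul, ← Complex.ofReal_sum, ← Finset.sum_div, ← hc]
          exact aux_scale_self c w hw
        rw [e1, e2, ← haa, aux_scale_self a u hu]
        linear_combination huvw
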